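/- Let d ≥ 1 and let κ₁, …, κ_d be uncountable regular cardinals with κ_{i+1} > 2^{κ_i} for i < d, and let κ < κ₁. Then for any f : κ₁ × ⋯ × κ_d → κ, there exist subsets κ′ᵢ ⊆ κᵢ with |κ′ᵢ| = κᵢ such that f is constant on κ′₁ × ⋯ × κ′_d. -/

import Mathlib

open Cardinal Set

/-- `C` is closed and unbounded in the ordinal `θ`. -/
def IsClubIn (C : Set Ordinal) (θ : Ordinal) : Prop :=
  (∀ a < θ, ∃ b ∈ C, a < b ∧ b < θ) ∧
  (∀ a < θ, a ≠ 0 → (∀ b < a, ∃ c ∈ C, b ≤ c ∧ c < a) → a ∈ C)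

/-- `S` is stationary in the ordinal `θ`: it meets every club subset of `θ`. -/
def IsStationaryIn (S : Set Ordinal) (θ : Ordinal) : Prop :=
  ∀ C : Set Ordinal, IsClubIn C θ → (S ∩ C).Nonempty


lemma myIsRegular_lift {K : Cardinal.{0}} (h : K.IsRegular) :
    (Cardinal.lift.{1} K).IsRegular := by
  constructor
  · exact (Cardinal.lift_aleph0.{1,0}) ▸ Cardinal.lift_le.2 h.1
  · rw [← Cardinal.lift_ord, ← Ordinal.lift_cof, h.cof_eq]

lemma myPigeon {K : Cardinal.{0}} (hK : K.IsRegular) {ι : Type 1}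
    (hι : Cardinal.mk ι < Cardinal.lift.{1} K) (g : Ordinal.{0} → ι) :
    ∃ c : ι, Cardinal.lift.{1} K ≤ Cardinal.mk {β : Ordinal | β < K.ord ∧ g β = c} := by
  by_contra h
  push_neg at h
  have hcover : Set.Iio K.ord ⊆ ⋃ c : ι, {β : Ordinal | β < K.ord ∧ g β = c} :=
    fun β hβ => Set.mem_iUnion.2 ⟨g β, hβ, rfl⟩
  have h1 : Cardinal.lift.{1} K ≤ #(⋃ c : ι, {β : Ordinal | β < K.ord ∧ g β = c}) := by
    calc Cardinal.lift.{1} K = #(Set.Iio K.ord) := by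
          rw [Ordinal.mk_Iio_ordinal, Cardinal.card_ord]
      _ ≤ _ := Cardinal.mk_le_mk_of_subset hcover
  have h2 := (Cardinal.mk_iUnion_le_sum_mk (ι := ι)
    (f := fun c => {β : Ordinal | β < K.ord ∧ g β = c}))
  have h3 := Cardinal.sum_lt_of_isRegular (myIsRegular_lift hK) hι (fun c => h c)
  exact absurd (h1.trans h2) h3.2

lemma myKmono {n : ℕ} {K : Fin n → Cardinal.{0}}
    (hstep : ∀ i : Fin n, ∀ h : i.1 + 1 < n, (2:Cardinal) ^ K i < K ⟨i.1+1, h⟩) :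
    ∀ a b : Fin n, a ≤ b → K a ≤ K b := by
  have step : ∀ (k : ℕ) (h : k + 1 < n), K ⟨k, by omega⟩ < K ⟨k+1, h⟩ :=
    fun k h => lt_of_le_of_lt (le_of_lt (Cardinal.cantor _)) (hstep ⟨k, by omega⟩ h)
  have main : ∀ (b : ℕ) (hb : b < n) (a : ℕ) (ha : a < n), a ≤ b → K ⟨a, ha⟩ ≤ K ⟨b, hb⟩ := by
    intro b
    induction b with
    | zero =>
      intro hb a ha hab
      have : a = 0 := Nat.le_zero.1 hab
      subst this; exact le_rfl
    | succ m ih =>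
      intro hb a ha hab
      rcases Nat.lt_succ_iff_lt_or_eq.1 (Nat.lt_succ_of_le hab) with h' | h'
      · exact (ih (by omega) a ha (by omega)).trans (step m hb).le
      · subst h'; exact le_rfl
  intro a b hab
  exact main b.1 b.2 a.1 a.2 hab

theorem myAux : ∀ (d : ℕ) (kappa : Cardinal.{0}) (K : Fin d → Cardinal.{0}),
    (∀ i, (K i).IsRegular) → (∀ i, ℵ₀ < K i) →
    (∀ i, kappa < K i) →
    (∀ i : Fin d, ∀ h : i.1 + 1 < d, (2 : Cardinal) ^ K i < K ⟨i.1 + 1, h⟩) →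
    ∀ f : (Fin d → Ordinal) → Ordinal,
    (∀ x : Fin d → Ordinal, (∀ i, x i < (K i).ord) → f x < kappa.ord) →
    ∃ S : Fin d → Set Ordinal,
      (∀ i, S i ⊆ Set.Iio (K i).ord ∧ Cardinal.mk (S i) = Cardinal.lift.{1,0} (K i)) ∧
      ∃ c : Ordinal, ∀ x : Fin d → Ordinal, (∀ i, x i ∈ S i) → f x = c := by
  intro d
  induction d with
  | zero =>
    intro kappa K _ _ _ _ f _
    refine ⟨fun i => i.elim0, fun i => i.elim0, f (fun i => i.elim0), fun x _ => ?_⟩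
    exact congrArg f (funext fun i => i.elim0)
  | succ d IH =>
    intro kappa K hreg hunc hk hstep f hf
    have hordpos : ∀ i : Fin (d+1), (0 : Ordinal) < (K i).ord := by
      intro i
      refine lt_of_lt_of_le Ordinal.omega0_pos ?_
      rw [← Cardinal.ord_aleph0]
      exact Cardinal.ord_le_ord.2 (hunc i).le
    have hkpos : (0 : Ordinal) < kappa.ord :=
      (zero_le (a := f (fun _ => 0))).trans_lt (hf (fun _ => 0) (fun i => hordpos i))
    have hk0 : kappa ≠ 0 := by
      intro h; rw [h, Cardinal.ord_zero] at hkpos; exact absurd hkpos (lt_irrefl _)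
    set L : Cardinal.{0} := K (Fin.last d) with hL
    set K' : Fin d → Cardinal.{0} := fun i => K i.castSucc with hK'
    -- the space of "colors"
    set D := {x : Fin d → Ordinal // ∀ i, x i < (K' i).ord} with hD
    set T := {o : Ordinal // o < kappa.ord} with hT
    have hTcard : Cardinal.mk T = Cardinal.lift.{1} kappa := by
      have := Ordinal.mk_Iio_ordinal kappa.ord
      rwa [Cardinal.card_ord] at this
    have hDcard : Cardinal.mk D = Cardinal.prod (fun i : Fin d => Cardinal.lift.{1} (K' i)) := by
      have e : D ≃ ∀ i : Fin d, {o : Ordinal.{0} // o < (K' i).ord} :=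
        Equiv.subtypePiEquivPi (β := fun _ : Fin d => Ordinal.{0})
          (p := fun i o => o < (K' i).ord)
      rw [Cardinal.mk_congr e, Cardinal.mk_pi]
      congr 1
      funext i
      have := Ordinal.mk_Iio_ordinal (K' i).ord
      rwa [Cardinal.card_ord] at this
    have hstep' : ∀ i : Fin d, ∀ h : i.1 + 1 < d, (2:Cardinal) ^ K' i < K' ⟨i.1+1, h⟩ :=
      fun i h => hstep i.castSucc (by simp)
    have hcolors : Cardinal.mk (D → T) < Cardinal.lift.{1} L := by
      rw [show Cardinal.mk (D → T) = Cardinal.mk T ^ Cardinal.mk D from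
        (Cardinal.power_def T D).symm, hTcard, hDcard]
      cases d with
      | zero =>
        simp only [K']
        rw [show (Cardinal.prod fun i : Fin 0 => Cardinal.lift.{1} (K i.castSucc)) = 1 from
          Cardinal.mk_eq_one _, Cardinal.power_one]
        exact Cardinal.lift_lt.2 (hk (Fin.last 0))
      | succ m =>
        have hML : (2:Cardinal) ^ (K' (Fin.last m)) < L := hstep ⟨m, by omega⟩ (show m + 1 < m + 2 by omega)
        have hMinf : ℵ₀ ≤ K' (Fin.last m) := (hunc _).le
        have hexp : Cardinal.prod (fun i : Fin (m+1) => Cardinal.lift.{1} (K' i)) ≤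
            Cardinal.lift.{1} (K' (Fin.last m)) := by
          calc Cardinal.prod (fun i : Fin (m+1) => Cardinal.lift.{1} (K' i))
              ≤ Cardinal.prod (fun _ : Fin (m+1) => Cardinal.lift.{1} (K' (Fin.last m))) :=
                Cardinal.prod_le_prod _ _ (fun i =>
                  Cardinal.lift_le.2 (myKmono hstep' i (Fin.last m) (Fin.le_last i)))
            _ = Cardinal.lift.{1} (K' (Fin.last m)) ^ ((m+1 : ℕ) : Cardinal.{1}) := by
                rw [Cardinal.prod_const]; simp
            _ ≤ Cardinal.lift.{1} (K' (Fin.last m)) := by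
                rw [Cardinal.power_natCast]
                exact Cardinal.power_nat_le (by simpa using hMinf)
        calc Cardinal.lift.{1} kappa ^ Cardinal.prod (fun i : Fin (m+1) => Cardinal.lift.{1} (K' i))
            ≤ Cardinal.lift.{1} kappa ^ Cardinal.lift.{1} (K' (Fin.last m)) :=
              Cardinal.power_le_power_left (by simpa using hk0) hexp
          _ ≤ Cardinal.lift.{1} ((2:Cardinal) ^ (K' (Fin.last m))) ^
                Cardinal.lift.{1} (K' (Fin.last m)) :=
              Cardinal.power_le_power_right
                (Cardinal.lift_le.2 ((hk _).le.trans (Cardinal.cantor _).le))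
          _ = Cardinal.lift.{1} (((2:Cardinal) ^ (K' (Fin.last m))) ^ (K' (Fin.last m))) := by
              rw [← Cardinal.lift_power]
          _ = Cardinal.lift.{1} ((2:Cardinal) ^ (K' (Fin.last m))) := by
              rw [← Cardinal.power_mul, Cardinal.mul_eq_self hMinf]
          _ < Cardinal.lift.{1} L := Cardinal.lift_lt.2 hML
    -- the coloring of the last coordinate
    set g : Ordinal.{0} → (D → T) := fun β x =>
      if h : f (Fin.snoc x.1 β) < kappa.ord then ⟨_, h⟩ else ⟨0, hkpos⟩ with hg
    obtain ⟨col, hcol⟩ := myPigeon (hreg (Fin.last d)) hcolors g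
    set Slast : Set Ordinal.{0} := {β : Ordinal | β < L.ord ∧ g β = col} with hSlast
    have hSlastIio : Slast ⊆ Set.Iio L.ord := fun β hβ => hβ.1
    have hSlastCard : Cardinal.mk Slast = Cardinal.lift.{1} L := by
      refine le_antisymm ?_ hcol
      calc Cardinal.mk Slast ≤ Cardinal.mk (Set.Iio L.ord) :=
            Cardinal.mk_le_mk_of_subset hSlastIio
        _ = Cardinal.lift.{1} L := by rw [Ordinal.mk_Iio_ordinal, Cardinal.card_ord]
    have hSlastNe : Slast.Nonempty := by
      rw [← Set.nonempty_coe_sort, ← Cardinal.mk_ne_zero_iff]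
      intro h0
      rw [h0] at hcol
      exact (hreg (Fin.last d)).pos.ne' (by simpa using hcol)
    obtain ⟨β₀, hβ₀⟩ := hSlastNe
    -- values of f on the product with γ < L.ord in the last slot are < kappa.ord
    have hb : ∀ (y : Fin d → Ordinal), (∀ i, y i < (K' i).ord) →
        ∀ γ, γ < L.ord → f (Fin.snoc y γ) < kappa.ord := by
      intro y hy γ hγ
      apply hf
      intro i
      refine Fin.lastCases ?_ ?_ i
      · rw [Fin.snoc_last]; exact hγ
      · intro j; rw [Fin.snoc_castSucc]; exact hy j
    -- key compatibility
    have key : ∀ β ∈ Slast, ∀ y : Fin d → Ordinal, (∀ i, y i < (K' i).ord) →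
        f (Fin.snoc y β) = f (Fin.snoc y β₀) := by
      intro β hβ y hy
      have e : g β = g β₀ := hβ.2.trans hβ₀.2.symm
      have e2 := congrFun e ⟨y, hy⟩
      rw [hg] at e2
      simp only [dif_pos (hb y hy β hβ.1), dif_pos (hb y hy β₀ hβ₀.1)] at e2
      exact congrArg Subtype.val e2
    -- apply the induction hypothesis
    have hreg' : ∀ i : Fin d, (K' i).IsRegular := fun i => hreg i.castSucc
    have hunc' : ∀ i : Fin d, ℵ₀ < K' i := fun i => hunc i.castSucc
    have hk' : ∀ i : Fin d, kappa < K' i := fun i => hk i.castSucc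
    obtain ⟨S', hS'prop, c', hc'⟩ := IH kappa K' hreg' hunc' hk' hstep'
      (fun y => f (Fin.snoc y β₀)) (fun y hy => hb y hy β₀ hβ₀.1)
    refine ⟨fun i => Fin.lastCases Slast S' i, ?_, c', ?_⟩
    · intro i
      refine Fin.lastCases ?_ ?_ i
      · simp only [Fin.lastCases_last]; exact ⟨hSlastIio, hSlastCard⟩
      · intro j; simp only [Fin.lastCases_castSucc]; exact hS'prop j
    · intro x hx
      set y : Fin d → Ordinal := fun j => x j.castSucc with hy
      have hyS : ∀ j, y j ∈ S' j := by
        intro j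
        have := hx j.castSucc
        simp only [Fin.lastCases_castSucc] at this; exact this
      have hyIio : ∀ j, y j < (K' j).ord := fun j => (hS'prop j).1 (hyS j)
      have hxl : x (Fin.last d) ∈ Slast := by
        have := hx (Fin.last d)
        simp only [Fin.lastCases_last] at this; exact this
      have hxy : x = Fin.snoc y (x (Fin.last d)) := by
        funext i
        refine Fin.lastCases ?_ ?_ i
        · rw [Fin.snoc_last]
        · intro j; rw [Fin.snoc_castSucc]
      calc f x = f (Fin.snoc y (x (Fin.last d))) := by rw [← hxy]
        _ = f (Fin.snoc y β₀) := key _ hxl y hyIio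
        _ = c' := hc' y hyS

/-- Full-cardinality polarized partition theorem: a coloring of `κ₁ × ⋯ × κ_d` by fewer than
`κ₁` colors is constant on a product of sets of full cardinality, provided `κ_{i+1} > 2^{κ_i}`. -/
theorem stmt_17 (kappa : Cardinal.{0}) (d : ℕ) (hd : 1 ≤ d)
    (K : Fin d → Cardinal.{0})
    (hreg : ∀ i, (K i).IsRegular) (hunc : ∀ i, ℵ₀ < K i)
    (h1 : kappa < K ⟨0, hd⟩)
    (hstep : ∀ i : Fin d, ∀ h : i.1 + 1 < d, (2 : Cardinal) ^ K i < K ⟨i.1 + 1, h⟩)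
    (f : (Fin d → Ordinal) → Ordinal)
    (hf : ∀ x : Fin d → Ordinal, (∀ i, x i < (K i).ord) → f x < kappa.ord) :
    ∃ S : Fin d → Set Ordinal,
      (∀ i, S i ⊆ Set.Iio (K i).ord ∧ Cardinal.mk (S i) = Cardinal.lift.{1,0} (K i)) ∧
      ∃ c : Ordinal, ∀ x : Fin d → Ordinal, (∀ i, x i ∈ S i) → f x = c := by
  have hk : ∀ i : Fin d, kappa < K i := fun i =>
    lt_of_lt_of_le h1 (myKmono hstep ⟨0, hd⟩ i (by simp [Fin.le_def]))
  exact myAux d kappa K hreg hunc hk hstep f hf
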